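/- Let B be the Banach space of 1-periodic functions continuous on the closed strip |Im θ| ≤ R/2 and holomorphic in its interior, with the sup norm. Then the projection Π⁺ sending v = Σ_{k∈ℤ} v_k e^{2πikθ} to Σ_{k≥1} v_k e^{2πikθ} is a bounded linear operator on B with operator norm at most 2 + 1/(e^{2πR} − 1). -/

import Mathlib

open Real

private lemma norm_cexp (z : ℂ) : ‖Complex.exp z‖ = Real.exp z.re := by
  rw [Complex.norm_exp]

private lemma geom_ratio {x : ℝ} (hx : 0 < x) :
    Real.exp (-x) / (1 - Real.exp (-x)) = 1 / (Real.exp x - 1) := by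
  have h0 : Real.exp x ≠ 0 := (Real.exp_pos x).ne'
  have h1 : 1 < Real.exp x := by
    rw [← Real.exp_zero]; exact Real.exp_lt_exp.mpr hx
  have h2 : Real.exp x - 1 ≠ 0 := by linarith
  have h3 : 1 - Real.exp (-x) ≠ 0 := by
    rw [Real.exp_neg]
    have : (Real.exp x)⁻¹ < 1 := by
      rw [inv_lt_one_iff₀]; right; exact h1
    linarith
  rw [Real.exp_neg] at *
  field_simp

private lemma geom_bound {C x : ℝ} (hx : 0 < x) (f : ℕ → ℂ)
    (hf : ∀ k : ℕ, ‖f k‖ ≤ C * Real.exp (-(x * (k + 1)))) :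
    Summable f ∧ ‖∑' k, f k‖ ≤ C / (Real.exp x - 1) := by
  set r := Real.exp (-x) with hr
  have hr0 : 0 ≤ r := (Real.exp_pos _).le
  have hr1 : r < 1 := by
    rw [hr, ← Real.exp_zero]; exact Real.exp_lt_exp.mpr (by linarith)
  have hbd : ∀ k : ℕ, ‖f k‖ ≤ (C * r) * r ^ k := by
    intro k
    refine (hf k).trans_eq ?_
    have h : Real.exp (-(x * (k + 1))) = Real.exp (-x) * Real.exp (-x) ^ k := by
      rw [← Real.exp_nat_mul, ← Real.exp_add]; congr 1; ring
    rw [h, hr]; ring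
  have hgeom : HasSum (fun k : ℕ => (C * r) * r ^ k) ((C * r) * (1 - r)⁻¹) :=
    (hasSum_geometric_of_lt_one hr0 hr1).mul_left _
  have hsum : Summable f := Summable.of_norm_bounded hgeom.summable hbd
  refine ⟨hsum, (tsum_of_norm_bounded hgeom hbd).trans_eq ?_⟩
  rw [mul_assoc, ← div_eq_mul_inv, geom_ratio hx, mul_one_div]


private lemma geom_summable (C x : ℝ) (hx : 0 < x) :
    Summable (fun k : ℕ => C * Real.exp (-(x * (k + 1)))) := by
  have h : (fun k : ℕ => C * Real.exp (-(x * (k+1))))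
      = fun k : ℕ => (C * Real.exp (-x)) * (Real.exp (-x))^k := by
    funext k
    rw [← Real.exp_nat_mul, mul_assoc, ← Real.exp_add]
    congr 2
    ring
  rw [h]
  exact (summable_geometric_of_lt_one (Real.exp_nonneg _)
    (by rw [← Real.exp_zero]; exact Real.exp_lt_exp.mpr (by linarith))).mul_left _


set_option maxHeartbeats 2000000 in
open Real in
/-- The projection `Π⁺ : Σ_{k∈ℤ} v_k e^{2πikθ} ↦ Σ_{k≥1} v_k e^{2πikθ}` is bounded on the
space of 1-periodic functions continuous on the closed strip `|Im θ| ≤ R/2`, holomorphic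
inside, with sup norm: `sup|Π⁺v| ≤ (2 + 1/(e^{2πR} − 1)) · sup|v|`. -/
theorem positive_projection_bound (R C : ℝ) (hR : 0 < R) (v : ℂ → ℂ) (vk : ℤ → ℂ)
    (hper : ∀ θ : ℂ, v (θ + 1) = v θ)
    (hcont : ContinuousOn v {θ : ℂ | |θ.im| ≤ R / 2})
    (hdiff : DifferentiableOn ℂ v {θ : ℂ | |θ.im| < R / 2})
    (hbound : ∀ θ : ℂ, |θ.im| ≤ R / 2 → ‖v θ‖ ≤ C)
    (hcoeff : ∀ (k : ℤ) (ρ : ℝ), |ρ| ≤ R / 2 →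
      vk k = ∫ t in (0 : ℝ)..1,
        v ((t : ℂ) + (ρ : ℂ) * Complex.I) *
          Complex.exp (-(2 * (π : ℂ) * Complex.I * (k : ℂ)) * ((t : ℂ) + (ρ : ℂ) * Complex.I))) :
    ∀ θ : ℂ, |θ.im| ≤ R / 2 →
      ‖∑' k : ℕ, vk (k + 1) * Complex.exp (2 * (π : ℂ) * Complex.I * ((k : ℂ) + 1) * θ)‖ ≤
        (2 + 1 / (Real.exp (2 * π * R) - 1)) * C := by
  have hπ : (0:ℝ) < π := Real.pi_pos
  have h2πR : 0 < 2 * π * R := by positivity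
  set E := Real.exp (2 * π * R) with hEdef
  have hE1 : (1:ℝ) < E := by
    rw [hEdef, ← Real.exp_zero]; exact Real.exp_lt_exp.mpr h2πR
  have hC0 : 0 ≤ C := by
    refine le_trans (norm_nonneg (v 0)) (hbound 0 ?_)
    simp only [Complex.zero_im, abs_zero]; positivity
  set M := (2 + 1 / (E - 1)) * C with hMdef
  have hM0 : 0 ≤ M := by
    have h1 : (0:ℝ) < E - 1 := by linarith
    have : (0:ℝ) ≤ 2 + 1 / (E - 1) := by positivity
    exact mul_nonneg this hC0
  set τ : ℤ → ℂ → ℂ :=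
    fun m θ => vk m * Complex.exp (2 * (π:ℂ) * Complex.I * (m:ℂ) * θ) with hτ
  -- coefficient bound
  have hvk : ∀ (m : ℤ) (ρ : ℝ), |ρ| ≤ R / 2 → ‖vk m‖ ≤ C * Real.exp (2 * π * m * ρ) := by
    intro m ρ hρ
    rw [hcoeff m ρ hρ]
    have key : ∀ t ∈ Set.uIoc (0:ℝ) 1,
        ‖v ((t : ℂ) + (ρ : ℂ) * Complex.I) *
          Complex.exp (-(2 * (π : ℂ) * Complex.I * (m : ℂ)) * ((t : ℂ) + (ρ : ℂ) * Complex.I))‖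
        ≤ C * Real.exp (2 * π * m * ρ) := by
      intro t _
      rw [norm_mul, norm_cexp]
      have h2 : ((-(2 * (π : ℂ) * Complex.I * (m : ℂ))) * ((t : ℂ) + (ρ : ℂ) * Complex.I)).re
          = 2*π*(m:ℝ)*ρ := by
        simp [Complex.mul_re, Complex.mul_im]
      rw [h2]
      have h1 : ‖v ((t : ℂ) + (ρ : ℂ) * Complex.I)‖ ≤ C := by
        refine hbound _ ?_
        simp only [Complex.add_im, Complex.ofReal_im, Complex.mul_im, Complex.ofReal_re,
          Complex.I_im, Complex.I_re, mul_zero, mul_one, zero_add, add_zero]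
        simpa using hρ
      exact mul_le_mul_of_nonneg_right h1 (Real.exp_nonneg _)
    have := intervalIntegral.norm_integral_le_of_norm_le_const key
    simpa using this
  -- term bound
  have hterm : ∀ (m : ℤ) (ρ : ℝ), |ρ| ≤ R / 2 → ∀ θ : ℂ,
      ‖τ m θ‖ ≤ C * Real.exp (2 * π * m * (ρ - θ.im)) := by
    intro m ρ hρ θ
    simp only [hτ]
    rw [norm_mul, norm_cexp]
    have h2 : (2*(π:ℂ)*Complex.I*(m:ℂ)*θ).re = -(2*π*(m:ℝ)*θ.im) := by
      simp [Complex.mul_re, Complex.mul_im]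
    rw [h2]
    calc ‖vk m‖ * Real.exp (-(2*π*(m:ℝ)*θ.im))
        ≤ (C * Real.exp (2*π*m*ρ)) * Real.exp (-(2*π*(m:ℝ)*θ.im)) :=
          mul_le_mul_of_nonneg_right (hvk m ρ hρ) (Real.exp_nonneg _)
      _ = C * Real.exp (2 * π * m * (ρ - θ.im)) := by
          rw [mul_assoc, ← Real.exp_add]; ring_nf
  have hFb : ∀ z : ℂ, -(R/2) < z.im →
      Summable (fun k : ℕ => τ ((k:ℤ)+1) z) ∧
        ‖∑' k : ℕ, τ ((k:ℤ)+1) z‖ ≤ C / (Real.exp (2*π*(z.im + R/2)) - 1) := by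
    intro z hz
    have hs : (0:ℝ) < z.im + R/2 := by linarith
    have hx : 0 < 2*π*(z.im + R/2) := by positivity
    refine geom_bound hx _ ?_
    intro k
    refine (hterm ((k:ℤ)+1) (-(R/2)) (by rw [abs_neg, abs_of_nonneg (by linarith)]) z).trans_eq ?_
    congr 1
    push_cast
    ring
  -- negative-part bounds
  have hgb : ∀ c : ℝ, c < R/2 → ∀ z : ℂ, z.im ≤ c →
      Summable (fun k : ℕ => τ (-((k:ℤ)+1)) z) ∧
        ‖∑' k : ℕ, τ (-((k:ℤ)+1)) z‖ ≤ C / (Real.exp (2*π*(R/2 - c)) - 1) := by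
    intro c hc z hz
    have hs : (0:ℝ) < R/2 - c := by linarith
    have hx : 0 < 2*π*(R/2 - c) := by positivity
    refine geom_bound hx _ ?_
    intro k
    refine (hterm (-((k:ℤ)+1)) (R/2) (by rw [abs_of_nonneg (by linarith)]) z).trans ?_
    have hk1 : (0:ℝ) ≤ (k:ℝ) + 1 := by positivity
    have hint : (0:ℝ) ≤ (2*π) * ((k:ℝ)+1) * (c - z.im) :=
      mul_nonneg (mul_nonneg (by linarith) hk1) (by linarith)
    refine mul_le_mul_of_nonneg_left ?_ hC0
    apply Real.exp_le_exp.mpr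
    push_cast
    nlinarith [hint]
  -- Fourier expansion identity on the open strip
  have hident : ∀ θ : ℂ, |θ.im| < R / 2 →
      v θ = (∑' k : ℕ, τ ((k:ℤ)+1) θ) + vk 0 + (∑' k : ℕ, τ (-((k:ℤ)+1)) θ) := by
    intro θ hθint
    obtain ⟨hy1, hy2⟩ := abs_lt.mp hθint
    haveI : Fact ((0:ℝ) < 1) := ⟨one_pos⟩
    set y := θ.im with hy
    set w : ℝ → ℂ := fun t => v ((t:ℂ) + (y:ℂ) * Complex.I) with hw
    have hyR : |y| ≤ R / 2 := le_of_lt hθint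
    have hwper : Function.Periodic w 1 := by
      intro t
      simp only [hw]
      rw [← hper ((t:ℂ) + (y:ℂ) * Complex.I)]
      congr 1
      push_cast
      ring
    have hwcont : Continuous w := by
      apply hcont.comp_continuous (by continuity)
      intro t
      simp only [Set.mem_setOf_eq, Complex.add_im, Complex.ofReal_im, Complex.mul_im,
        Complex.ofReal_re, Complex.I_im, Complex.I_re, mul_zero, mul_one, zero_add, add_zero]
      simpa using hyR
    set fc : C(AddCircle (1:ℝ), ℂ) := ⟨hwper.lift, hwcont.quotient_liftOn' _⟩ with hfc
    have hfc_coe : ∀ t : ℝ, fc ((t : ℝ) : AddCircle (1:ℝ)) = w t := fun t => rfl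
    have hcoeffs : ∀ k : ℤ, fourierCoeff (⇑fc) k = τ k ((y:ℂ) * Complex.I) := by
      intro k
      rw [fourierCoeff_eq_intervalIntegral (⇑fc) k 0]
      rw [show ((1:ℝ)/(1:ℝ)) = 1 by norm_num, one_smul, zero_add]
      simp only [hτ]
      rw [hcoeff k y hyR, ← intervalIntegral.integral_mul_const]
      apply intervalIntegral.integral_congr
      intro t ht
      simp only [smul_eq_mul, fourier_coe_apply, hfc_coe, hw]
      rw [mul_comm]
      rw [mul_assoc (v ((t:ℂ) + (y:ℂ) * Complex.I)), ← Complex.exp_add]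
      congr 1
      push_cast
      ring
    have hsum_fc : Summable (fourierCoeff (⇑fc)) := by
      have hq1 : Real.exp (-(2*π*(R/2 + y))) < 1 := by
        rw [← Real.exp_zero]
        apply Real.exp_lt_exp.mpr
        have : (0:ℝ) < R/2 + y := by linarith
        nlinarith
      have hq1' : (0:ℝ) ≤ Real.exp (-(2*π*(R/2 + y))) := Real.exp_nonneg _
      have hq2 : Real.exp (-(2*π*(R/2 - y))) < 1 := by
        rw [← Real.exp_zero]
        apply Real.exp_lt_exp.mpr
        have : (0:ℝ) < R/2 - y := by linarith
        nlinarith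
      have hq2' : (0:ℝ) ≤ Real.exp (-(2*π*(R/2 - y))) := Real.exp_nonneg _
      have hyI : ((y:ℂ) * Complex.I).im = y := by simp
      have hpos : Summable (fun n : ℕ => fourierCoeff (⇑fc) (n : ℤ)) := by
        apply Summable.of_norm_bounded
          (g := fun n : ℕ => C * (Real.exp (-(2*π*(R/2 + y))))^n)
          ((summable_geometric_of_lt_one hq1' hq1).mul_left C)
        intro n
        rw [hcoeffs]
        refine (hterm (n:ℤ) (-(R/2)) (by rw [abs_neg, abs_of_nonneg (by linarith)]) _).trans_eq ?_
        rw [← Real.exp_nat_mul, hyI]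
        congr 1
        push_cast
        ring
      have hneg : Summable (fun n : ℕ => fourierCoeff (⇑fc) (-((n:ℤ)+1))) := by
        apply Summable.of_norm_bounded
          (g := fun n : ℕ => (C * Real.exp (-(2*π*(R/2 - y)))) * (Real.exp (-(2*π*(R/2 - y))))^n)
          ((summable_geometric_of_lt_one hq2' hq2).mul_left _)
        intro n
        rw [hcoeffs]
        refine (hterm (-((n:ℤ)+1)) (R/2) (by rw [abs_of_nonneg (by linarith)]) _).trans_eq ?_
        rw [← Real.exp_nat_mul, mul_assoc C, ← Real.exp_add, hyI]
        congr 1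
        push_cast
        ring
      exact Summable.of_nat_of_neg_add_one hpos hneg
    have hps := has_pointwise_sum_fourier_series_of_summable hsum_fc ((θ.re : ℝ) : AddCircle (1:ℝ))
    have hfun : (fun i : ℤ => fourierCoeff (⇑fc) i • (fourier i) ((θ.re : ℝ) : AddCircle (1:ℝ)))
        = fun i : ℤ => τ i θ := by
      funext i
      rw [hcoeffs, fourier_coe_apply, smul_eq_mul]
      simp only [hτ]
      rw [mul_assoc (vk i), ← Complex.exp_add]
      congr 1
      conv_rhs => rw [← Complex.re_add_im θ]
      rw [← hy]
      push_cast
      ring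
    rw [hfun] at hps
    have hvθ : fc ((θ.re : ℝ) : AddCircle (1:ℝ)) = v θ := by
      rw [hfc_coe]
      simp only [hw]
      rw [hy, Complex.re_add_im]
    rw [hvθ] at hps
    have hFs : HasSum (fun k : ℕ => τ ((k:ℤ)+1) θ) (∑' k : ℕ, τ ((k:ℤ)+1) θ) :=
      ((hFb θ (by rw [← hy]; linarith)).1).hasSum
    have hgs : HasSum (fun k : ℕ => τ (-((k:ℤ)+1)) θ) (∑' k : ℕ, τ (-((k:ℤ)+1)) θ) :=
      ((hgb y hy2 θ (by rw [← hy]) ).1).hasSum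
    have hnat : HasSum (fun n : ℕ => τ (n : ℤ) θ) ((∑' k : ℕ, τ ((k:ℤ)+1) θ) + vk 0) := by
      have heq : (fun n : ℕ => τ (((n+1 : ℕ)) : ℤ) θ) = fun n : ℕ => τ ((n:ℤ)+1) θ := by
        funext n
        norm_cast
      have h1 : HasSum (fun n : ℕ => τ (((n+1 : ℕ)) : ℤ) θ) (∑' k : ℕ, τ ((k:ℤ)+1) θ) := by
        rw [heq]; exact hFs
      have h2 := (hasSum_nat_add_iff (f := fun n : ℕ => τ (n : ℤ) θ) 1).mp h1
      simpa [hτ] using h2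
    have htotal : HasSum (fun k : ℤ => τ k θ)
        ((∑' k : ℕ, τ ((k:ℤ)+1) θ) + vk 0 + (∑' k : ℕ, τ (-((k:ℤ)+1)) θ)) :=
      HasSum.of_nat_of_neg_add_one hnat hgs
    exact hps.unique htotal
  -- interior bound via Phragmén–Lindelöf
  have hinterior : ∀ θ : ℂ, -(R/2) < θ.im → θ.im < R/2 →
      ‖∑' k : ℕ, τ ((k:ℤ)+1) θ‖ ≤ M := by
    intro θ hy1 hy2
    have h2E : (0:ℝ) < 2*E - 1 := by linarith
    have h3E : (0:ℝ) < 3*E - 2 := by linarith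
    set b₀ : ℝ := Real.log ((3*E - 2)/(2*E - 1)) / (2*π) - R/2 with hb₀def
    set b : ℝ := max θ.im b₀ with hbdef
    have hratio1 : 1 < (3*E-2)/(2*E-1) := by
      rw [lt_div_iff₀ h2E]; linarith
    have hlogpos : 0 < Real.log ((3*E-2)/(2*E-1)) := Real.log_pos hratio1
    have hb₀low : -(R/2) < b₀ := by
      rw [hb₀def]
      have : 0 < Real.log ((3*E-2)/(2*E-1)) / (2*π) := by positivity
      linarith
    have hb₀high : b₀ < R/2 := by
      rw [hb₀def]
      have hlt : (3*E-2)/(2*E-1) < E := by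
        rw [div_lt_iff₀ h2E]; nlinarith
      have : Real.log ((3*E-2)/(2*E-1)) < 2*π*R := by
        calc Real.log ((3*E-2)/(2*E-1)) < Real.log E := Real.log_lt_log (by positivity) hlt
          _ = 2*π*R := by rw [hEdef, Real.log_exp]
      have h2π : (0:ℝ) < 2*π := by positivity
      have := (div_lt_iff₀ h2π).mpr (by linarith : Real.log ((3*E-2)/(2*E-1)) < R * (2*π))
      linarith
    have hby : θ.im ≤ b := le_max_left _ _
    have hbR : b < R/2 := max_lt hy2 hb₀high
    have hblow : -(R/2) < b := lt_of_lt_of_le hb₀low (le_max_right _ _)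
    have habs : |b| < R/2 := abs_lt.mpr ⟨hblow, hbR⟩
    -- top-line numeric bound
    have hkey : (E-1)/(2*E-1) ≤ Real.exp (2*π*(b + R/2)) - 1 := by
      have h1 : 2*π*(b₀ + R/2) = Real.log ((3*E-2)/(2*E-1)) := by
        rw [hb₀def]; field_simp; ring
      have h2 : Real.exp (2*π*(b₀ + R/2)) = (3*E-2)/(2*E-1) := by
        rw [h1, Real.exp_log (by positivity)]
      have h3 : Real.exp (2*π*(b₀ + R/2)) ≤ Real.exp (2*π*(b + R/2)) := by
        apply Real.exp_le_exp.mpr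
        have hbb : b₀ ≤ b := le_max_right _ _
        have := mul_le_mul_of_nonneg_left (add_le_add_right hbb (R/2))
          (by positivity : (0:ℝ) ≤ 2*π)
        linarith
      rw [h2] at h3
      have h4 : (3*E-2)/(2*E-1) - 1 = (E-1)/(2*E-1) := by rw [div_sub_one h2E.ne']; ring
      linarith
    have htop : C / (Real.exp (2*π*(b + R/2)) - 1) ≤ M := by
      have hpos : (0:ℝ) < (E-1)/(2*E-1) := div_pos (by linarith) h2E
      have h1 : C / (Real.exp (2*π*(b+R/2)) - 1) ≤ C / ((E-1)/(2*E-1)) :=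
        div_le_div_of_nonneg_left hC0 hpos hkey
      have h2 : C / ((E-1)/(2*E-1)) = M := by
        rw [hMdef]
        have : E - 1 ≠ 0 := by linarith
        field_simp
        ring
      linarith
    -- setup for Phragmén–Lindelöf
    set g : ℂ → ℂ := fun z => ∑' k : ℕ, τ (-((k:ℤ)+1)) z with hgdef
    set G : ℂ → ℂ := fun z => v z - vk 0 - g z with hGdef
    set U : Set ℂ := Complex.im ⁻¹' (Set.Ioo (-(R/2)) b) with hUdef
    have hUopen : IsOpen U := IsOpen.preimage Complex.continuous_im isOpen_Ioo
    have hUsub : U ⊆ {z : ℂ | |z.im| < R/2} := by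
      intro z hz
      exact abs_lt.mpr ⟨hz.1, lt_trans hz.2 hbR⟩
    -- uniform bounds for g
    have hx_b : (0:ℝ) < 2*π*(R/2 - b) := by
      have : (0:ℝ) < R/2 - b := by linarith
      positivity
    have husum : Summable (fun k : ℕ => C * Real.exp (-(2*π*(R/2 - b) * (k+1)))) :=
      geom_summable C _ hx_b
    have hubound : ∀ (k : ℕ) (z : ℂ), z ∈ {z : ℂ | z.im ≤ b} →
        ‖τ (-((k:ℤ)+1)) z‖ ≤ C * Real.exp (-(2*π*(R/2 - b) * (k+1))) := by
      intro k z hz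
      refine (hterm (-((k:ℤ)+1)) (R/2) (by rw [abs_of_nonneg (by linarith)]) z).trans ?_
      have hk1 : (0:ℝ) ≤ (k:ℝ) + 1 := by positivity
      have hint : (0:ℝ) ≤ (2*π) * ((k:ℝ)+1) * (b - z.im) :=
        mul_nonneg (mul_nonneg (by linarith) hk1) (sub_nonneg.mpr (by simpa using hz))
      refine mul_le_mul_of_nonneg_left ?_ hC0
      apply Real.exp_le_exp.mpr
      push_cast
      nlinarith [hint]
    have hτcont : ∀ m : ℤ, Continuous (fun z : ℂ => τ m z) := by
      intro m
      simp only [hτ]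
      exact continuous_const.mul ((continuous_const.mul continuous_id).cexp)
    have hτdiff : ∀ m : ℤ, Differentiable ℂ (fun z : ℂ => τ m z) := by
      intro m
      simp only [hτ]
      exact (differentiable_const _).mul (((differentiable_const _).mul differentiable_id).cexp)
    have hgcont : ContinuousOn g {z : ℂ | z.im ≤ b} :=
      continuousOn_tsum (fun k => (hτcont _).continuousOn) husum hubound
    have hgdiffU : DifferentiableOn ℂ g U :=
      Complex.differentiableOn_tsum_of_summable_norm husum (fun k => (hτdiff _).differentiableOn)
        hUopen (fun k w hw => hubound k w (le_of_lt hw.2))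
    have hGdiff : DifferentiableOn ℂ G U :=
      ((hdiff.mono hUsub).sub (differentiableOn_const _)).sub hgdiffU
    have hGcontIcc : ContinuousOn G (Complex.im ⁻¹' (Set.Icc (-(R/2)) b)) := by
      refine ((hcont.mono ?_).sub continuousOn_const).sub (hgcont.mono ?_)
      · intro z hz
        exact abs_le.mpr ⟨hz.1, le_trans hz.2 hbR.le⟩
      · intro z hz
        exact hz.2
    have hGdcc : DiffContOnCl ℂ G U := by
      refine ⟨hGdiff, hGcontIcc.mono (closure_minimal ?_ ?_)⟩
      · intro z hz
        exact ⟨hz.1.le, hz.2.le⟩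
      · exact IsClosed.preimage Complex.continuous_im isClosed_Icc
    have hgle : ∀ z : ℂ, z.im ≤ b → ‖g z‖ ≤ C / (Real.exp (2*π*(R/2 - b)) - 1) :=
      fun z hz => (hgb b hbR z hz).2
    have hvk0 : ‖vk 0‖ ≤ C := by
      have := hvk 0 0 (by rw [abs_zero]; positivity)
      simpa using this
    have hG_A : ∀ z : ℂ, z.im = -(R/2) → ‖G z‖ ≤ M := by
      intro z him
      have hvz : ‖v z‖ ≤ C := hbound z (by rw [him, abs_neg, abs_of_nonneg (by linarith)])
      have hgz : ‖g z‖ ≤ C / (E - 1) := by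
        have := (hgb (-(R/2)) (by linarith) z (by rw [him])).2
        rw [show 2*π*(R/2 - -(R/2)) = 2*π*R by ring, ← hEdef] at this
        exact this
      have hMeq : M = C + C + C/(E-1) := by rw [hMdef]; ring
      calc ‖G z‖ = ‖v z - vk 0 - g z‖ := rfl
        _ ≤ ‖v z - vk 0‖ + ‖g z‖ := norm_sub_le _ _
        _ ≤ (‖v z‖ + ‖vk 0‖) + ‖g z‖ := by gcongr; exact norm_sub_le _ _
        _ ≤ C + C + C/(E-1) := by gcongr
        _ = M := hMeq.symm
    have hG_B : ∀ z : ℂ, z.im = b → ‖G z‖ ≤ M := by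
      intro z him
      have hzabs : |z.im| < R/2 := by rw [him]; exact habs
      have hid := hident z hzabs
      have hGF : G z = ∑' k : ℕ, τ ((k:ℤ)+1) z := by
        simp only [hGdef, hgdef]
        rw [hid]; ring
      rw [hGF]
      refine le_trans (hFb z (by rw [him]; exact hblow)).2 ?_
      rw [him]
      exact htop
    have hgrowth : ∃ c < π/(b - -(R/2)), ∃ B,
        G =O[Filter.comap (_root_.abs ∘ Complex.re) Filter.atTop ⊓
          Filter.principal (Complex.im ⁻¹' Set.Ioo (-(R/2)) b)]
          fun z => Real.exp (B * Real.exp (c * |z.re|)) := by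
      refine ⟨0, div_pos hπ (by linarith), 0, ?_⟩
      apply Asymptotics.IsBigO.of_bound (C + (C + C / (Real.exp (2*π*(R/2-b)) - 1)))
      rw [Filter.eventually_inf_principal]
      apply Filter.Eventually.of_forall
      intro z hz
      have hvz : ‖v z‖ ≤ C := hbound z (abs_le.mpr ⟨hz.1.le, le_trans hz.2.le hbR.le⟩)
      have hgz := hgle z hz.2.le
      simp only [zero_mul, Real.exp_zero, mul_one, norm_one]
      calc ‖G z‖ = ‖v z - vk 0 - g z‖ := rfl
        _ ≤ ‖v z - vk 0‖ + ‖g z‖ := norm_sub_le _ _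
        _ ≤ (‖v z‖ + ‖vk 0‖) + ‖g z‖ := by gcongr; exact norm_sub_le _ _
        _ ≤ (C + C) + C / (Real.exp (2*π*(R/2-b)) - 1) := by gcongr
        _ = C + (C + C / (Real.exp (2*π*(R/2-b)) - 1)) := by ring
    have hPL := PhragmenLindelof.horizontal_strip (a := -(R/2)) (b := b)
      hGdcc hgrowth hG_A hG_B (z := θ) (by linarith) hby
    have hidθ := hident θ (abs_lt.mpr ⟨hy1, hy2⟩)
    have hGF : G θ = ∑' k : ℕ, τ ((k:ℤ)+1) θ := by
      simp only [hGdef, hgdef]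
      rw [hidθ]; ring
    rw [hGF] at hPL
    exact hPL
  -- goal tsum in τ-form
  have hgoalfun : ∀ θ : ℂ,
      (fun k : ℕ => vk (k + 1) * Complex.exp (2 * (π:ℂ) * Complex.I * ((k:ℂ) + 1) * θ))
        = fun k : ℕ => τ ((k:ℤ)+1) θ := by
    intro θ; funext k; simp only [hτ]; norm_num
  intro θ₀ hθ₀
  rw [hgoalfun θ₀]
  obtain ⟨hy1, hy2⟩ := abs_le.mp hθ₀
  rcases eq_or_lt_of_le hy1 with hbot | hbot
  · -- boundary case im = -R/2, via Abel's limit theorem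
    by_cases hsum : Summable (fun k : ℕ => τ ((k:ℤ)+1) θ₀)
    · -- Abel limit argument
      set f : ℕ → ℂ := fun n => if n = 0 then 0 else τ (n:ℤ) θ₀ with hf
      have hf1 : ∀ n : ℕ, f (n+1) = τ ((n:ℤ)+1) θ₀ := by
        intro n
        simp only [hf, Nat.succ_ne_zero, if_false]
        norm_cast
      have hfs : Summable f := by
        rw [← summable_nat_add_iff 1]
        simpa only [hf1] using hsum
      set L := ∑' n, f n with hL
      have hLF : L = ∑' k : ℕ, τ ((k:ℤ)+1) θ₀ := by
        rw [hL, Summable.tsum_eq_zero_add hfs]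
        simp only [hf1]
        simp [hf]
      have htd : Filter.Tendsto (fun n => ∑ i ∈ Finset.range n, f i)
          Filter.atTop (nhds L) := hfs.hasSum.tendsto_sum_nat
      have hAbel := Complex.tendsto_tsum_powerSeries_nhdsWithin_lt htd
      have hxtend : Filter.Tendsto (fun ε : ℝ => Real.exp (-(2*π*ε)))
          (nhdsWithin 0 (Set.Ioi 0)) (nhdsWithin 1 (Set.Iio 1)) := by
        rw [tendsto_nhdsWithin_iff]
        constructor
        · have hc : Continuous (fun ε : ℝ => Real.exp (-(2*π*ε))) := by continuity
          have h1 : Filter.Tendsto (fun ε : ℝ => Real.exp (-(2*π*ε))) (nhds 0) (nhds 1) := by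
            have := hc.tendsto 0
            simpa using this
          exact h1.mono_left nhdsWithin_le_nhds
        · refine eventually_mem_nhdsWithin.mono (fun ε hε => ?_)
          have hε' : (0:ℝ) < ε := hε
          simp only [Set.mem_Iio]
          rw [← Real.exp_zero]
          apply Real.exp_lt_exp.mpr
          nlinarith
      have hxmap : Filter.Tendsto (fun ε : ℝ => ((Real.exp (-(2*π*ε)) : ℝ) : ℂ))
          (nhdsWithin 0 (Set.Ioi 0))
          ((nhdsWithin 1 (Set.Iio 1)).map Complex.ofReal) :=
        Filter.Tendsto.comp Filter.tendsto_map hxtend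
      have hcomp := hAbel.comp hxmap
      have hkey : ∀ (ε : ℝ) (n : ℕ),
          τ ((n:ℤ)+1) θ₀ * ((Real.exp (-(2*π*ε)) : ℝ) : ℂ)^(n+1)
            = τ ((n:ℤ)+1) (θ₀ + (ε:ℂ) * Complex.I) := by
        intro ε n
        simp only [hτ]
        rw [Complex.ofReal_exp, ← Complex.exp_nat_mul, mul_assoc (vk _), ← Complex.exp_add]
        congr 1
        congr 1
        push_cast
        linear_combination (-(2*(π:ℂ)*((n:ℂ)+1)*(ε:ℂ))) * Complex.I_sq
      have heq : ∀ᶠ ε : ℝ in nhdsWithin 0 (Set.Ioi 0),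
          (∑' n : ℕ, f n * ((Real.exp (-(2*π*ε)) : ℝ) : ℂ)^n)
            = ∑' k : ℕ, τ ((k:ℤ)+1) (θ₀ + (ε:ℂ) * Complex.I) := by
        filter_upwards [Ioo_mem_nhdsGT_of_mem (Set.mem_Ico.mpr ⟨le_refl (0:ℝ), hR⟩)] with ε hε
        have him : (θ₀ + (ε:ℂ) * Complex.I).im = θ₀.im + ε := by simp
        have hgt : -(R/2) < (θ₀ + (ε:ℂ) * Complex.I).im := by
          rw [him, ← hbot]; linarith [hε.1]
        have hshift : (fun n : ℕ => f (n+1) * ((Real.exp (-(2*π*ε)) : ℝ) : ℂ)^(n+1))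
            = fun n : ℕ => τ ((n:ℤ)+1) (θ₀ + (ε:ℂ) * Complex.I) := by
          funext n
          rw [hf1, hkey]
        have hsum3 : Summable (fun n : ℕ => f (n+1) * ((Real.exp (-(2*π*ε)) : ℝ) : ℂ)^(n+1)) := by
          rw [hshift]
          exact (hFb _ hgt).1
        have hsum2 : Summable (fun n : ℕ => f n * ((Real.exp (-(2*π*ε)) : ℝ) : ℂ)^n) :=
          (summable_nat_add_iff 1).mp hsum3
        rw [Summable.tsum_eq_zero_add hsum2]
        have hzero : f 0 * ((Real.exp (-(2*π*ε)) : ℝ) : ℂ)^0 = 0 := by simp [hf]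
        rw [hzero, zero_add]
        exact tsum_congr (fun n => by rw [hf1, hkey])
      have hFtend : Filter.Tendsto
          (fun ε : ℝ => ∑' k : ℕ, τ ((k:ℤ)+1) (θ₀ + (ε:ℂ) * Complex.I))
          (nhdsWithin 0 (Set.Ioi 0)) (nhds L) := hcomp.congr' heq
      have hev : ∀ᶠ ε : ℝ in nhdsWithin 0 (Set.Ioi 0),
          ‖∑' k : ℕ, τ ((k:ℤ)+1) (θ₀ + (ε:ℂ) * Complex.I)‖ ≤ M := by
        filter_upwards [Ioo_mem_nhdsGT_of_mem (Set.mem_Ico.mpr ⟨le_refl (0:ℝ), hR⟩)] with ε hε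
        have him : (θ₀ + (ε:ℂ) * Complex.I).im = θ₀.im + ε := by simp
        apply hinterior
        · rw [him, ← hbot]; linarith [hε.1]
        · rw [him, ← hbot]; linarith [hε.2]
      have hLle : ‖L‖ ≤ M := le_of_tendsto hFtend.norm hev
      rw [← hLF]
      exact hLle
    · rw [tsum_eq_zero_of_not_summable hsum, norm_zero]
      exact hM0
  · rcases lt_or_eq_of_le hy2 with htop | htop
    · exact hinterior θ₀ (by linarith) htop
    · -- top boundary: direct geometric bound
      refine le_trans ((hFb θ₀ (by linarith)).2) ?_
      rw [htop]
      have h1 : (0:ℝ) < E - 1 := by linarith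
      have h2 : R/2 + R/2 = R := by ring
      rw [show 2*π*(R/2 + R/2) = 2*π*R by ring, ← hEdef]
      rw [hMdef, div_eq_mul_one_div]
      nlinarith [mul_nonneg hC0 (le_of_lt (one_div_pos.mpr h1))]
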